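/- Let b, d ∈ ℝ with d > 0. The function (a, ν) ↦ (1+d)·a·exp((b − a − ν)/a) + ν is convex on the open half-space { (a, ν) ∈ ℝ² : a > 0 }. -/

import Mathlib

/-- Key perspective inequality for `exp`. -/
lemma persp_exp_key (a1 a2 x1 x2 s t : ℝ) (ha1 : 0 < a1) (ha2 : 0 < a2)
    (hs : 0 ≤ s) (ht : 0 ≤ t) (hst : s + t = 1) :
    (s * a1 + t * a2) * Real.exp ((s * x1 + t * x2) / (s * a1 + t * a2)) ≤
      s * a1 * Real.exp (x1 / a1) + t * a2 * Real.exp (x2 / a2) := by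
  set A := s * a1 + t * a2 with hA
  have hApos : 0 < A := by
    rcases eq_or_lt_of_le hs with h | h
    · have : t = 1 := by linarith
      simp [hA, ← h, this, ha2]
    · nlinarith [mul_nonneg ht ha2.le, mul_pos h ha1]
  have hw1 : 0 ≤ s * a1 / A := by positivity
  have hw2 : 0 ≤ t * a2 / A := by positivity
  have hsum : s * a1 / A + t * a2 / A = 1 := by field_simp; exact hA.symm
  have hconv := convexOn_exp.2 (Set.mem_univ (x1 / a1)) (Set.mem_univ (x2 / a2)) hw1 hw2 hsum
  have hcomb : (s * a1 / A) • (x1 / a1) + (t * a2 / A) • (x2 / a2)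
      = (s * x1 + t * x2) / A := by
    simp only [smul_eq_mul]
    field_simp
  rw [hcomb] at hconv
  have := mul_le_mul_of_nonneg_left hconv hApos.le
  calc A * Real.exp ((s * x1 + t * x2) / A)
      ≤ A * ((s * a1 / A) • Real.exp (x1 / a1) + (t * a2 / A) • Real.exp (x2 / a2)) := this
    _ = s * a1 * Real.exp (x1 / a1) + t * a2 * Real.exp (x2 / a2) := by
        simp only [smul_eq_mul]
        field_simp

/-- For `d > 0` and `b : ℝ`, the function
`(a, ν) ↦ (1+d) * a * exp ((b - a - ν)/a) + ν` is convex on the open half-space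
`{ (a, ν) : a > 0 }`. -/
theorem dual_term_convex_on_halfspace (b d : ℝ) (hd : 0 < d) :
    ConvexOn ℝ {p : ℝ × ℝ | 0 < p.1}
      (fun p : ℝ × ℝ => (1 + d) * p.1 * Real.exp ((b - p.1 - p.2) / p.1) + p.2) := by
  constructor
  · exact convex_halfSpace_gt (IsLinearMap.mk (fun x y => rfl) (fun c x => rfl)) 0
  · rintro ⟨a1, v1⟩ h1 ⟨a2, v2⟩ h2 s t hs ht hst
    simp only [Set.mem_setOf_eq] at h1 h2
    simp only [Prod.smul_mk, Prod.mk_add_mk, smul_eq_mul]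
    have key := persp_exp_key a1 a2 (b - a1 - v1) (b - a2 - v2) s t h1 h2 hs ht hst
    have hX : s * (b - a1 - v1) + t * (b - a2 - v2)
        = b - (s * a1 + t * a2) - (s * v1 + t * v2) := by linear_combination b * hst
    rw [hX] at key
    have h1d : (0:ℝ) ≤ 1 + d := by linarith
    nlinarith [mul_le_mul_of_nonneg_left key h1d]
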